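/- Let (Y_n)_{n≥-2} be i.i.d. uniform on [0,1], X_{n,1} = max{Y_n, Y_{n-2}, Y_{n-3}}, u_n = 1 - τ'/n with τ' > 0, and let A_{i,n} = {X_{i,1} ≤ u_n < X_{i+1,1}} denote an upcrossing at time i. Then P(A_{1,n} ∩ A_{3,n}^c)/P(A_{1,n}) → 1/2 as n → ∞; i.e., the upcrossings index of the sequence (X_{n,1}) is η₁ = 1/2. -/

import Mathlib

open MeasureTheory ProbabilityTheory Filter Set

lemma stmt8_aux_prob
    {Ω : Type*} [MeasurableSpace Ω] (P : Measure Ω) [IsProbabilityMeasure P]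
    (Y : ℤ → Ω → ℝ) (hYm : ∀ i, Measurable (Y i))
    (hIndep : iIndepFun Y P)
    (hUnif : ∀ i, Measure.map (Y i) P = volume.restrict (Icc (0:ℝ) 1))
    {v : ℝ} (h1 : v ≤ 1) (s : Finset ℤ) :
    P (⋂ i ∈ s, Y i ⁻¹' Iic v) = ENNReal.ofReal v ^ s.card := by
  have hone : ∀ i : ℤ, P (Y i ⁻¹' Iic v) = ENNReal.ofReal v := by
    intro i
    rw [← Measure.map_apply (hYm i) measurableSet_Iic, hUnif i,
      Measure.restrict_apply measurableSet_Iic]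
    have : Iic v ∩ Icc (0:ℝ) 1 = Icc 0 v := by
      ext x
      simp only [mem_inter_iff, mem_Iic, mem_Icc]
      constructor
      · rintro ⟨h, h2, h3⟩; exact ⟨h2, h⟩
      · rintro ⟨h2, h⟩; exact ⟨h, h2, le_trans h h1⟩
    rw [this, Real.volume_Icc]
    norm_num
  rw [hIndep.measure_inter_preimage_eq_mul s (fun i _ => measurableSet_Iic)]
  simp [hone, Finset.prod_const]

theorem stmt8
    {Ω : Type*} [MeasurableSpace Ω] (P : Measure Ω) [IsProbabilityMeasure P]
    (Y : ℤ → Ω → ℝ) (hYm : ∀ i, Measurable (Y i))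
    (hIndep : iIndepFun Y P)
    (hUnif : ∀ i, Measure.map (Y i) P = volume.restrict (Icc (0:ℝ) 1))
    (τ' : ℝ) (hτ : 0 < τ')
    (X : ℕ → Ω → ℝ)
    (hX : ∀ i : ℕ, X i = fun ω => max (Y i ω) (max (Y ((i:ℤ) - 2) ω) (Y ((i:ℤ) - 3) ω)))
    (u : ℕ → ℝ) (hu : ∀ n : ℕ, u n = 1 - τ' / n)
    (A : ℕ → ℕ → Set Ω)
    (hA : ∀ i n, A i n = {ω | X i ω ≤ u n ∧ u n < X (i + 1) ω}) :
    Tendsto (fun n : ℕ => (P (A 1 n ∩ (A 3 n)ᶜ)).toReal / (P (A 1 n)).toReal)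
      atTop (nhds (1 / 2)) := by
  -- u n → 1
  have hu1 : Tendsto u atTop (nhds 1) := by
    have h : Tendsto (fun n : ℕ => 1 - τ' / (n : ℝ)) atTop (nhds (1 - 0)) :=
      tendsto_const_nhds.sub (tendsto_const_div_atTop_nhds_zero_nat τ')
    rw [sub_zero] at h
    exact h.congr fun n => (hu n).symm
  -- eventually 0 < u n < 1
  have hev : ∀ᶠ n : ℕ in atTop, 0 < u n ∧ u n < 1 := by
    have h1 : ∀ᶠ n : ℕ in atTop, τ' < (n : ℝ) :=
      tendsto_natCast_atTop_atTop.eventually_gt_atTop τ'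
    filter_upwards [h1] with n hn
    have hn0 : (0 : ℝ) < n := lt_trans hτ hn
    constructor
    · rw [hu n]
      have : τ' / n < 1 := (div_lt_one hn0).mpr hn
      linarith
    · rw [hu n]
      have : 0 < τ' / n := div_pos hτ hn0
      linarith
  -- the key eventual equality
  have key : ∀ᶠ n : ℕ in atTop,
      (P (A 1 n ∩ (A 3 n)ᶜ)).toReal / (P (A 1 n)).toReal
        = (1 + u n - (u n) ^ 2) / (1 + u n) := by
    filter_upwards [hev] with n hn
    obtain ⟨hv0, hv1⟩ := hn
    set v := u n with hv
    have h0 : (0 : ℝ) ≤ v := le_of_lt hv0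
    have h1 : v ≤ 1 := le_of_lt hv1
    set E : ℤ → Set Ω := fun i => Y i ⁻¹' Iic v with hE
    have hEm : ∀ i, MeasurableSet (E i) := fun i => (hYm i) measurableSet_Iic
    have hprob : ∀ s : Finset ℤ, P (⋂ i ∈ s, E i) = ENNReal.ofReal v ^ s.card :=
      fun s => stmt8_aux_prob P Y hYm hIndep hUnif h1 s
    -- set identities
    have hA1eq : A 1 n = (⋂ i ∈ ({-2,-1,1} : Finset ℤ), E i) \
        (⋂ i ∈ ({-2,-1,0,1,2} : Finset ℤ), E i) := by
      ext ω
      simp only [hA, hX, hE, mem_setOf_eq, mem_diff, mem_iInter, Finset.mem_insert,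
        Finset.mem_singleton, mem_preimage, mem_Iic]
      norm_num [max_le_iff, lt_max_iff, not_le, forall_eq_or_imp, forall_eq]
      constructor
      · rintro ⟨⟨h1, hm1, hm2⟩, hd⟩
        refine ⟨⟨hm2, hm1, h1⟩, fun _ _ h0 _ => ?_⟩
        rcases hd with h | h | h
        · exact h
        · exact absurd h0 (not_le.mpr h)
        · exact absurd hm1 (not_le.mpr h)
      · rintro ⟨⟨hm2, hm1, h1⟩, himp⟩
        by_cases h0 : Y 0 ω ≤ v
        · exact ⟨⟨h1, hm1, hm2⟩, Or.inl (himp hm2 hm1 h0 h1)⟩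
        · exact ⟨⟨h1, hm1, hm2⟩, Or.inr (Or.inl (lt_of_not_ge h0))⟩
    have hA13eq : A 1 n ∩ A 3 n = (⋂ i ∈ ({-2,-1,0,1,3} : Finset ℤ), E i) \
        (⋂ i ∈ ({-2,-1,0,1,2,3} : Finset ℤ), E i) := by
      ext ω
      simp only [hA, hX, hE, mem_setOf_eq, mem_inter_iff, mem_diff, mem_iInter,
        Finset.mem_insert, Finset.mem_singleton, mem_preimage, mem_Iic]
      norm_num [max_le_iff, lt_max_iff, not_le, forall_eq_or_imp, forall_eq]
      constructor
      · rintro ⟨⟨⟨h1, hm1, hm2⟩, hd1⟩, ⟨h3, _, h0⟩, _⟩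
        refine ⟨⟨hm2, hm1, h0, h1, h3⟩, fun _ _ _ _ h2 => ?_⟩
        rcases hd1 with h | h | h
        · exact absurd h2 (not_le.mpr h)
        · exact absurd h0 (not_le.mpr h)
        · exact absurd hm1 (not_le.mpr h)
      · rintro ⟨⟨hm2, hm1, h0, h1, h3⟩, himp⟩
        have h2 : v < Y 2 ω := by
          by_contra hc
          exact absurd h3 (not_le.mpr (himp hm2 hm1 h0 h1 (not_lt.mp hc)))
        exact ⟨⟨⟨h1, hm1, hm2⟩, Or.inl h2⟩, ⟨h3, h1, h0⟩, Or.inr (Or.inl h2)⟩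
    -- measurability of finite intersections
    have hMI : ∀ s : Finset ℤ, MeasurableSet (⋂ i ∈ s, E i) :=
      fun s => Finset.measurableSet_biInter s fun i _ => hEm i
    -- subset relations
    have hsub1 : (⋂ i ∈ ({-2,-1,0,1,2} : Finset ℤ), E i) ⊆
        (⋂ i ∈ ({-2,-1,1} : Finset ℤ), E i) := by
      intro ω h
      simp only [mem_iInter, Finset.mem_insert, Finset.mem_singleton] at h ⊢
      exact fun i hi => h i (by tauto)
    have hsub2 : (⋂ i ∈ ({-2,-1,0,1,2,3} : Finset ℤ), E i) ⊆
        (⋂ i ∈ ({-2,-1,0,1,3} : Finset ℤ), E i) := by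
      intro ω h
      simp only [mem_iInter, Finset.mem_insert, Finset.mem_singleton] at h ⊢
      exact fun i hi => h i (by tauto)
    -- measure of A 1 n
    have hPA1 : (P (A 1 n)).toReal = v ^ 3 - v ^ 5 := by
      rw [hA1eq, measure_diff hsub1 (hMI _).nullMeasurableSet (measure_ne_top P _),
        hprob, hprob, ENNReal.toReal_sub_of_le
          (pow_le_pow_of_le_one zero_le (ENNReal.ofReal_le_one.mpr h1) (by norm_num))
          (ENNReal.pow_ne_top ENNReal.ofReal_ne_top)]
      · norm_num [ENNReal.toReal_pow, ENNReal.toReal_ofReal h0]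
    have hPA13 : (P (A 1 n ∩ A 3 n)).toReal = v ^ 5 - v ^ 6 := by
      rw [hA13eq, measure_diff hsub2 (hMI _).nullMeasurableSet (measure_ne_top P _),
        hprob, hprob, ENNReal.toReal_sub_of_le
          (pow_le_pow_of_le_one zero_le (ENNReal.ofReal_le_one.mpr h1) (by norm_num))
          (ENNReal.pow_ne_top ENNReal.ofReal_ne_top)]
      · norm_num [ENNReal.toReal_pow, ENNReal.toReal_ofReal h0]
    have hnum : (P (A 1 n ∩ (A 3 n)ᶜ)).toReal = (v ^ 3 - v ^ 5) - (v ^ 5 - v ^ 6) := by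
      have heq : A 1 n ∩ (A 3 n)ᶜ = A 1 n \ (A 1 n ∩ A 3 n) := by
        ext ω; simp only [mem_inter_iff, mem_compl_iff, mem_diff]; tauto
      have hAm : MeasurableSet (A 1 n ∩ A 3 n) := by
        rw [hA13eq]; exact (hMI _).diff (hMI _)
      rw [heq, measure_diff inter_subset_left hAm.nullMeasurableSet (measure_ne_top P _),
        ENNReal.toReal_sub_of_le (measure_mono inter_subset_left) (measure_ne_top P _),
        hPA1, hPA13]
    -- algebra
    rw [hnum, hPA1]
    have hd : v ^ 3 - v ^ 5 ≠ 0 := by nlinarith [pow_pos hv0 3, pow_lt_one₀ h0 hv1 (two_ne_zero)]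
    have h2 : (1 : ℝ) + v ≠ 0 := by linarith
    rw [div_eq_div_iff hd h2]
    ring
  -- conclude by continuity
  have htarget : Tendsto (fun n : ℕ => (1 + u n - (u n) ^ 2) / (1 + u n)) atTop
      (nhds ((1 + 1 - 1 ^ 2) / (1 + 1))) := by
    apply Tendsto.div
    · exact (tendsto_const_nhds.add hu1).sub (hu1.pow 2)
    · exact tendsto_const_nhds.add hu1
    · norm_num
  norm_num at htarget
  exact htarget.congr' (key.mono fun n h => h.symm)
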